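/- arXiv:1304.1424 — 2 statements merged into one kernel-verified Lean document; each statement's English description precedes it below -/
import Mathlib

section
/- Let G be a bipartite graph with parts A and B, and suppose B¹ ⊆ B is a set of degree-1 vertices of B no two of which share a neighbor. Let X ⊆ B \ B¹ and let X' = X ∪ {b ∈ B¹ : the neighbor of b lies in N(X)}. If |N_{G'}(X)| < |X| in the induced subgraph G' = G[(A \ N(B¹)) ∪ (B \ B¹)], then |N_G(X')| < |X'|, where N denotes neighborhoods in the respective graphs. -/
/-- Lifting a deficient set: in a bipartite graph with parts `A`, `B`, let `B¹ ⊆ B` consist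
of degree-1 vertices no two of which share a neighbor. If `X ⊆ B \ B¹` is deficient in the
graph induced on `(A \ N(B¹)) ∪ (B \ B¹)`, then
`X' = X ∪ {b ∈ B¹ : the neighbor of b lies in N(X)}` is deficient in `G`. -/
theorem stmt_17 {V : Type*} [Fintype V] [DecidableEq V]
    (G : SimpleGraph V) [DecidableRel G.Adj] (A B B1 : Finset V)
    (hbip : ∀ u v : V, G.Adj u v → (u ∈ A ∧ v ∈ B) ∨ (u ∈ B ∧ v ∈ A))
    (hB1 : B1 ⊆ B)
    (hdeg1 : ∀ b ∈ B1, ∃! a : V, G.Adj a b)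
    (hnoshare : ∀ b ∈ B1, ∀ b' ∈ B1, b ≠ b' → ∀ a : V, G.Adj a b → ¬ G.Adj a b')
    (X : Finset V) (hX : X ⊆ B \ B1)
    (hdef : ((A \ A.filter (fun a => ∃ b ∈ B1, G.Adj a b)).filter
        (fun a => ∃ b ∈ X, G.Adj a b)).card < X.card) :
    (A.filter (fun a => ∃ b ∈
        X ∪ B1.filter (fun b => ∃ a' : V, G.Adj a' b ∧
          a' ∈ A.filter (fun a'' => ∃ b'' ∈ X, G.Adj a'' b'')),
      G.Adj a b)).card <
    (X ∪ B1.filter (fun b => ∃ a' : V, G.Adj a' b ∧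
        a' ∈ A.filter (fun a'' => ∃ b'' ∈ X, G.Adj a'' b''))).card := by
  classical
  set NX : Finset V := A.filter (fun a => ∃ b ∈ X, G.Adj a b) with hNX
  set NB1 : Finset V := A.filter (fun a => ∃ b ∈ B1, G.Adj a b) with hNB1
  set Y : Finset V := B1.filter (fun b => ∃ a' : V, G.Adj a' b ∧
      a' ∈ A.filter (fun a'' => ∃ b'' ∈ X, G.Adj a'' b'')) with hY
  -- the LHS neighborhood equals NX
  have hLHS : A.filter (fun a => ∃ b ∈ X ∪ Y, G.Adj a b) = NX := by
    ext a
    simp only [hNX, Finset.mem_filter, Finset.mem_union]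
    constructor
    · rintro ⟨ha, b, hb | hb, hab⟩
      · exact ⟨ha, b, hb, hab⟩
      · simp only [hY, Finset.mem_filter] at hb
        obtain ⟨hbB1, a', ha'b, ha'NX⟩ := hb
        obtain ⟨u, _, huniq⟩ := hdeg1 b hbB1
        have : a = a' := (huniq a hab).trans (huniq a' ha'b).symm
        subst this
        exact ⟨ha, ha'NX.2⟩
    · rintro ⟨ha, b, hb, hab⟩
      exact ⟨ha, b, Or.inl hb, hab⟩
  rw [hLHS]
  -- X and Y are disjoint
  have hdisj : Disjoint X Y := by
    refine Finset.disjoint_left.mpr fun b hbX hbY => ?_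
    have := hX hbX
    simp only [Finset.mem_sdiff] at this
    exact this.2 (Finset.mem_filter.mp hbY).1
  rw [Finset.card_union_of_disjoint hdisj]
  -- |NX ∩ NB1| ≤ |Y|
  have hinj : (NX ∩ NB1).card ≤ Y.card := by
    have : ∀ a : V, ∃ b : V, a ∈ NX ∩ NB1 → b ∈ Y ∧ G.Adj a b := by
      intro a
      by_cases ha : a ∈ NX ∩ NB1
      · rw [Finset.mem_inter] at ha
        obtain ⟨haNX, haNB1⟩ := ha
        obtain ⟨haA, b, hbB1, hab⟩ := Finset.mem_filter.mp haNB1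
        refine ⟨b, fun _ => ⟨?_, hab⟩⟩
        rw [hY, Finset.mem_filter]
        exact ⟨hbB1, a, hab, haNX⟩
      · exact ⟨a, fun h => absurd h ha⟩
    choose f hf using this
    apply Finset.card_le_card_of_injOn f (fun a ha => (hf a ha).1)
    intro a ha a' ha' hff
    obtain ⟨u, _, huniq⟩ := hdeg1 (f a) (Finset.mem_filter.mp (hf a ha).1).1
    have h1 := huniq a (hf a ha).2
    have h2 := huniq a' (hff ▸ (hf a' ha').2)
    exact h1.trans h2.symm
  -- |NX| ≤ |N'X| + |NX ∩ NB1|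
  have hsplit : NX.card ≤ ((A \ NB1).filter (fun a => ∃ b ∈ X, G.Adj a b)).card
      + (NX ∩ NB1).card := by
    have heq : (A \ NB1).filter (fun a => ∃ b ∈ X, G.Adj a b) = NX \ NB1 := by
      ext a
      simp only [hNX, Finset.mem_filter, Finset.mem_sdiff]
      tauto
    rw [heq]
    rw [← Finset.card_inter_add_card_sdiff NX NB1]
    omega
  calc NX.card ≤ ((A \ NB1).filter (fun a => ∃ b ∈ X, G.Adj a b)).card
      + (NX ∩ NB1).card := hsplit
    _ < X.card + Y.card := by omega
end

section
/- Every finite simple undirected graph on n ≥ 2 vertices with minimum degree at least 3 contains a cycle of length at most 2·log₂(n) + 2 (more generally, a graph with minimum degree at least 3 has girth at most 2·log₂ n + 2). -/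
open SimpleGraph

section Aux

variable {V : Type*} [DecidableEq V] {G : SimpleGraph V}

/-- Two distinct paths between the same pair of vertices yield a cycle whose length is at most
the sum of the lengths of the two paths. -/
lemma aux_two_paths_cycle {u v : V} (p q : G.Walk u v) (hp : p.IsPath) (hq : q.IsPath)
    (hne : p ≠ q) :
    ∃ (x : V) (c : G.Walk x x), c.IsCycle ∧ c.length ≤ p.length + q.length := by
  classical
  set S : Set (Sym2 V) := {e | e ∈ p.edges ∨ e ∈ q.edges} with hS
  set H : SimpleGraph V := SimpleGraph.fromEdgeSet S with hH
  have hle : H ≤ G := by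
    rw [hH, ← SimpleGraph.fromEdgeSet_edgeSet G]
    apply SimpleGraph.fromEdgeSet_mono
    rintro e (he | he)
    · exact p.edges_subset_edgeSet he
    · exact q.edges_subset_edgeSet he
  have hpe : ∀ e ∈ p.edges, e ∈ H.edgeSet := fun e he => by
    rw [hH, SimpleGraph.edgeSet_fromEdgeSet]
    exact ⟨Or.inl he, G.not_isDiag_of_mem_edgeSet (p.edges_subset_edgeSet he)⟩
  have hqe : ∀ e ∈ q.edges, e ∈ H.edgeSet := fun e he => by
    rw [hH, SimpleGraph.edgeSet_fromEdgeSet]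
    exact ⟨Or.inr he, G.not_isDiag_of_mem_edgeSet (q.edges_subset_edgeSet he)⟩
  set p' : H.Walk u v := p.transfer H hpe with hp'def
  set q' : H.Walk u v := q.transfer H hqe with hq'def
  have hp' : p'.IsPath := hp.transfer hpe
  have hq' : q'.IsPath := hq.transfer hqe
  have hne' : p' ≠ q' := by
    intro h
    apply hne
    have h2 := congrArg
      (fun (w : H.Walk u v) =>
        w.transfer G (fun e he => SimpleGraph.edgeSet_mono hle (w.edges_subset_edgeSet he))) h
    simpa [hp'def, hq'def, Walk.transfer_transfer, Walk.transfer_self] using h2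
  have hnac : ¬ H.IsAcyclic := by
    intro ha
    have := SimpleGraph.isAcyclic_iff_path_unique.mp ha (⟨p', hp'⟩ : H.Path u v) ⟨q', hq'⟩
    exact hne' (Subtype.ext_iff.mp this)
  rw [SimpleGraph.IsAcyclic] at hnac
  push_neg at hnac
  obtain ⟨x, c, hc⟩ := hnac
  refine ⟨x, c.mapLe hle, Walk.IsCycle.mapLe hle hc, ?_⟩
  have hnodup : c.edges.Nodup := hc.edges_nodup
  have hsub : c.edges.toFinset ⊆ p.edges.toFinset ∪ q.edges.toFinset := by
    intro e he
    rw [List.mem_toFinset] at he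
    have := c.edges_subset_edgeSet he
    rw [hH, SimpleGraph.edgeSet_fromEdgeSet] at this
    rcases this.1 with h1 | h1
    · exact Finset.mem_union_left _ (List.mem_toFinset.mpr h1)
    · exact Finset.mem_union_right _ (List.mem_toFinset.mpr h1)
  have : (c.mapLe hle).length = c.length := Walk.length_map _ _
  rw [this]
  calc c.length = c.edges.length := (c.length_edges).symm
    _ = c.edges.toFinset.card := (List.toFinset_card_of_nodup hnodup).symm
    _ ≤ (p.edges.toFinset ∪ q.edges.toFinset).card := Finset.card_le_card hsub
    _ ≤ p.edges.toFinset.card + q.edges.toFinset.card := Finset.card_union_le _ _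
    _ ≤ p.edges.length + q.edges.length :=
        Nat.add_le_add (List.toFinset_card_le _) (List.toFinset_card_le _)
    _ = p.length + q.length := by rw [p.length_edges, q.length_edges]

lemma aux_card_ext [Fintype V] [DecidableRel G.Adj] {B : ℕ}
    (hB : ∀ (x : V) (c : G.Walk x x), c.IsCycle → B < c.length)
    {v x : V} (w : G.Walk x v) (hw : w.IsPath) (hlen : w.length + 1 ≤ B) :
    G.degree x ≤ (G.neighborFinset x \ w.support.toFinset).card + min w.length 1 := by
  have key : (G.neighborFinset x ∩ w.support.toFinset).card ≤ min w.length 1 := by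
    cases w with
    | nil =>
      have : G.neighborFinset v ∩ (Walk.nil : G.Walk v v).support.toFinset = ∅ := by
        ext z
        simp only [Finset.mem_inter, SimpleGraph.mem_neighborFinset, Walk.support_nil,
          List.toFinset_cons, List.toFinset_nil, insert_empty_eq, Finset.mem_singleton,
          Finset.notMem_empty, iff_false, not_and]
        rintro hz rfl
        exact G.irrefl hz
      rw [this]
      simp
    | @cons _ y _ hxy q =>
      have h1 : min (Walk.cons hxy q).length 1 = 1 := by
        simp [Walk.length_cons]
      rw [h1]
      apply Finset.card_le_one.mpr
      have hone : ∀ z ∈ G.neighborFinset x ∩ (Walk.cons hxy q).support.toFinset, z = y := by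
        intro z hz
        rw [Finset.mem_inter, SimpleGraph.mem_neighborFinset, List.mem_toFinset] at hz
        obtain ⟨hz1, hz2⟩ := hz
        rw [Walk.support_cons, List.mem_cons] at hz2
        rcases hz2 with rfl | hz2
        · exact absurd hz1 (G.irrefl)
        by_contra hzy
        -- construct a short cycle
        have hq : q.IsPath := hw.of_cons
        have hxns : x ∉ q.support := ((Walk.cons_isPath_iff _ _).mp hw).2
        set t := q.takeUntil z hz2 with ht_def
        have ht : t.IsPath := hq.takeUntil hz2
        have hxt : x ∉ t.support := fun h => hxns (q.support_takeUntil_subset hz2 h)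
        set d := Walk.cons hxy t with hd_def
        have hd : d.IsPath := (Walk.cons_isPath_iff _ _).mpr ⟨ht, hxt⟩
        have hedge : s(z, x) ∉ d.edges := by
          rw [hd_def, Walk.edges_cons, List.mem_cons]
          rintro (hc | hc)
          · rw [Sym2.eq_iff] at hc
            rcases hc with ⟨rfl, _⟩ | ⟨rfl, _⟩
            · exact G.irrefl hz1
            · exact hzy rfl
          · exact hxt (t.snd_mem_support_of_mem_edges hc)
        have hcyc : (Walk.cons hz1.symm d).IsCycle :=
          (Walk.cons_isCycle_iff d hz1.symm).mpr ⟨hd, hedge⟩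
        have hlt := hB z _ hcyc
        have h2 : t.length ≤ q.length := q.length_takeUntil_le hz2
        have h3 : (Walk.cons hz1.symm d).length = t.length + 2 := by
          rw [Walk.length_cons, hd_def, Walk.length_cons]
        rw [Walk.length_cons] at hlen
        omega
      intro a ha b hb
      rw [hone a ha, hone b hb]
  have := Finset.card_sdiff_add_card_inter (G.neighborFinset x) w.support.toFinset
  rw [← SimpleGraph.card_neighborFinset_eq_degree]
  omega


/-- The tail of a rooted walk. -/
def auxTail {v : V} : (Σ x : V, G.Walk x v) → (Σ x : V, G.Walk x v)
  | ⟨_, Walk.nil⟩ => ⟨v, Walk.nil⟩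
  | ⟨_, Walk.cons _ q⟩ => ⟨_, q⟩

lemma aux_grow [Fintype V] [DecidableRel G.Adj] (hdeg : ∀ u : V, 3 ≤ G.degree u) {B : ℕ}
    (hB : ∀ (x : V) (c : G.Walk x x), c.IsCycle → B < c.length) (v : V) :
    ∀ k : ℕ, k + 1 ≤ B → ∃ S : Finset (Σ x : V, G.Walk x v),
      (∀ s ∈ S, s.2.IsPath ∧ s.2.length = k) ∧ 1 ≤ S.card ∧
      (1 ≤ k → 3 * 2 ^ (k - 1) ≤ S.card) := by
  intro k
  induction k with
  | zero =>
    intro _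
    refine ⟨{⟨v, Walk.nil⟩}, ?_, by simp, by omega⟩
    intro s hs
    rw [Finset.mem_singleton] at hs
    subst hs
    exact ⟨Walk.IsPath.nil, rfl⟩
  | succ k ih =>
    intro hkB
    obtain ⟨S, hSprop, hS1, hS2⟩ := ih (by omega)
    -- extension finsets
    let f : {s // s ∈ S} → Finset (Σ x : V, G.Walk x v) := fun s =>
      ((G.neighborFinset s.1.1 \ s.1.2.support.toFinset).attach).image
        (fun y => ⟨y.1, Walk.cons
          (G.adj_symm (by
            have := y.2
            rw [Finset.mem_sdiff, SimpleGraph.mem_neighborFinset] at this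
            exact this.1)) s.1.2⟩)
    have hmemf : ∀ (s : {s // s ∈ S}) a, a ∈ f s →
        ∃ (y : V) (h : G.Adj y s.1.1), y ∉ s.1.2.support ∧ a = ⟨y, Walk.cons h s.1.2⟩ := by
      intro s a ha
      rw [Finset.mem_image] at ha
      obtain ⟨y, hy, rfl⟩ := ha
      have hy2 := y.2
      rw [Finset.mem_sdiff, SimpleGraph.mem_neighborFinset, List.mem_toFinset] at hy2
      exact ⟨y.1, G.adj_symm hy2.1, hy2.2, rfl⟩
    have htl : ∀ (s : {s // s ∈ S}) a, a ∈ f s → auxTail a = s.1 := by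
      intro s a ha
      obtain ⟨y, h, _, rfl⟩ := hmemf s a ha
      rfl
    have hdisj : ∀ s ∈ S.attach, ∀ t ∈ S.attach, s ≠ t → Disjoint (f s) (f t) := by
      intro s _ t _ hst
      rw [Finset.disjoint_left]
      intro a haS hat
      exact hst (Subtype.ext (((htl s a haS).symm).trans (htl t a hat)))
    have hcardf : ∀ s : {s // s ∈ S}, 3 - min k 1 ≤ (f s).card := by
      intro s
      have hinj : Function.Injective
          (fun (y : {y // y ∈ G.neighborFinset s.1.1 \ s.1.2.support.toFinset}) =>
            (⟨y.1, Walk.cons (G.adj_symm (by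
            have := y.2
            rw [Finset.mem_sdiff, SimpleGraph.mem_neighborFinset] at this
            exact this.1)) s.1.2⟩ : Σ x : V, G.Walk x v)) := by
        intro a b h
        exact Subtype.ext (congrArg Sigma.fst h)
      have h1 : (f s).card = (G.neighborFinset s.1.1 \ s.1.2.support.toFinset).card := by
        rw [Finset.card_image_of_injective _ hinj, Finset.card_attach]
      obtain ⟨hpath, hlen⟩ := hSprop s.1 s.2
      have h2 := aux_card_ext hB s.1.2 hpath (by omega)
      have h3 := hdeg s.1.1
      rw [hlen] at h2
      omega
    refine ⟨S.attach.biUnion f, ?_, ?_, ?_⟩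
    · intro a ha
      rw [Finset.mem_biUnion] at ha
      obtain ⟨s, _, ha⟩ := ha
      obtain ⟨y, h, hns, rfl⟩ := hmemf s a ha
      obtain ⟨hpath, hlen⟩ := hSprop s.1 s.2
      exact ⟨(Walk.cons_isPath_iff _ _).mpr ⟨hpath, hns⟩, by simp [hlen]⟩
    · rw [Finset.card_biUnion hdisj]
      obtain ⟨s, hs⟩ := Finset.card_pos.mp hS1
      calc 1 ≤ (f ⟨s, hs⟩).card := le_trans (by omega) (hcardf ⟨s, hs⟩)
        _ ≤ _ := Finset.single_le_sum (f := fun s => (f s).card) (fun _ _ => Nat.zero_le _)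
              (Finset.mem_attach _ ⟨s, hs⟩)
    · intro _
      rw [Finset.card_biUnion hdisj]
      have hsum : S.attach.card • (3 - min k 1) ≤ ∑ s ∈ S.attach, (f s).card :=
        Finset.card_nsmul_le_sum S.attach (fun s => (f s).card) (3 - min k 1)
          (fun s _ => hcardf s)
      simp only [smul_eq_mul, Finset.card_attach] at hsum
      rcases Nat.eq_zero_or_pos k with rfl | hk
      · have h0 : min 0 1 = 0 := rfl
        rw [h0] at hsum
        have h01 : 3 * 2 ^ (0 + 1 - 1) = 3 := by norm_num
        rw [h01]
        omega
      · have h4 := hS2 hk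
        have : 3 * 2 ^ (k + 1 - 1) ≤ S.card * (3 - min k 1) := by
          have hmin : min k 1 = 1 := Nat.min_eq_right hk
          rw [hmin]
          have : 2 ^ (k + 1 - 1) = 2 * 2 ^ (k - 1) := by
            rw [← pow_succ']
            congr 1
            omega
          rw [this]
          calc 3 * (2 * 2 ^ (k - 1)) = 2 * (3 * 2 ^ (k - 1)) := by ring
            _ ≤ 2 * S.card := by omega
            _ ≤ S.card * (3 - 1) := by omega
        exact le_trans this hsum

end Aux

/-- Every finite simple graph on `n ≥ 2` vertices with minimum degree at least 3 contains
a cycle of length at most `2 log₂ n + 2`. -/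



theorem stmt_19 {V : Type*} [Fintype V] [DecidableEq V]
    (G : SimpleGraph V) [DecidableRel G.Adj]
    (hn : 2 ≤ Fintype.card V)
    (hdeg : ∀ v : V, 3 ≤ G.degree v) :
    ∃ (v : V) (w : G.Walk v v), w.IsCycle ∧
      (w.length : ℝ) ≤ 2 * Real.logb 2 (Fintype.card V) + 2 := by
  by_contra hcon
  push_neg at hcon
  set n := Fintype.card V with hn_def
  set r := Nat.log 2 n with hr_def
  have h2r : (2 : ℕ) ^ r ≤ n := Nat.pow_log_le_self 2 (by omega)
  have hr : (r : ℝ) ≤ Real.logb 2 n := by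
    have h2 : ((2 : ℝ)) ^ r ≤ (n : ℝ) := by exact_mod_cast h2r
    calc (r : ℝ) = Real.logb 2 ((2 : ℝ) ^ r) := by
          rw [Real.logb_pow, Real.logb_self_eq_one (by norm_num), mul_one]
      _ ≤ Real.logb 2 n :=
          Real.logb_le_logb_of_le (by norm_num) (by positivity) h2
  have hB : ∀ (x : V) (c : G.Walk x x), c.IsCycle → 2 * r + 2 < c.length := by
    intro x c hc
    by_contra hle
    push_neg at hle
    have h1 := hcon x c hc
    have h2 : (c.length : ℝ) ≤ 2 * (r : ℝ) + 2 := by exact_mod_cast hle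
    have : (c.length : ℝ) ≤ 2 * Real.logb 2 n + 2 := by linarith
    linarith
  have hne : Nonempty V := Fintype.card_pos_iff.mp (by omega)
  obtain ⟨v⟩ := hne
  obtain ⟨S, hSprop, _, hS2⟩ := aux_grow hdeg hB v (r + 1) (by omega)
  have hcard : 3 * 2 ^ r ≤ S.card := by simpa using hS2 (by omega)
  have hinj : Set.InjOn (fun s : Σ x : V, G.Walk x v => s.1) S := by
    rintro ⟨x, w1⟩ hs ⟨y, w2⟩ ht h
    simp only at h
    subst h
    by_contra hne
    have hw : w1 ≠ w2 := by
      intro hw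
      subst hw
      exact hne rfl
    obtain ⟨hp1, hl1⟩ := hSprop _ hs
    obtain ⟨hp2, hl2⟩ := hSprop _ ht
    obtain ⟨z, c, hc, hclen⟩ := aux_two_paths_cycle w1 w2 hp1 hp2 hw
    have := hB z c hc
    simp only at hl1 hl2
    omega
  have hcardV : S.card ≤ n := by
    have := Finset.card_le_card_of_injOn (fun s : Σ x : V, G.Walk x v => s.1)
      (fun _ _ => Finset.mem_univ _) hinj
    simpa [hn_def] using this
  have hlt : n < 2 ^ (r + 1) := Nat.lt_pow_succ_log_self (by norm_num) n
  have : (2:ℕ) ^ (r+1) = 2 * 2 ^ r := by rw [pow_succ]; ring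
  omega
end
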